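/- Key pointwise inequality for quantized consensus: let L be the Laplacian of a weakly connected weight-balanced graph on N nodes, y ∈ ℝ^N with 𝟙ᵀy = 0, x ∈ ℝ^N with y = x − (𝟙𝟙ᵀ/N)x, and v ∈ ℝ^N with ‖v − x‖ ≤ √N·Δ/2. Then −yᵀLv ≤ −λ₂(Sym(L))‖y‖(‖y‖ − (‖L‖/λ₂(Sym(L)))·(Δ/2)·√N). -/

import Mathlib

open Matrix

/-- The Euclidean norm of a vector in `ℝ^N`. -/
noncomputable def en {N : ℕ} (v : Fin N → ℝ) : ℝ := Real.sqrt (∑ i, v i ^ 2)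

section helpers

variable {N : ℕ}

lemma en_nonneg (v : Fin N → ℝ) : 0 ≤ en v := Real.sqrt_nonneg _

lemma en_sq (v : Fin N → ℝ) : en v ^ 2 = ∑ i, v i ^ 2 :=
  Real.sq_sqrt (by positivity)

lemma en_eq_norm (v : Fin N → ℝ) :
    en v = ‖(WithLp.equiv 2 (Fin N → ℝ)).symm v‖ := by
  rw [EuclideanSpace.norm_eq]
  simp [en, Real.norm_eq_abs, sq_abs]

lemma dot_eq_inner (a b : Fin N → ℝ) :
    a ⬝ᵥ b = (inner ℝ ((WithLp.equiv 2 (Fin N → ℝ)).symm a)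
      ((WithLp.equiv 2 (Fin N → ℝ)).symm b) : ℝ) := by
  simp [PiLp.inner_apply, dotProduct, RCLike.inner_apply, mul_comm]

lemma abs_dot_le (a b : Fin N → ℝ) : |a ⬝ᵥ b| ≤ en a * en b := by
  rw [dot_eq_inner, en_eq_norm, en_eq_norm]
  exact abs_real_inner_le_norm _ _

lemma quad_form (A : Matrix (Fin N) (Fin N) ℝ)
    (hbal : ∀ i, ∑ j, A i j = ∑ j, A j i)
    (L : Matrix (Fin N) (Fin N) ℝ)
    (hL : L = (Matrix.diagonal fun i => ∑ j, A i j) - A) (w : Fin N → ℝ) :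
    w ⬝ᵥ L.mulVec w = (1/2) * ∑ i, ∑ j, A i j * (w i - w j)^2 := by
  subst hL
  have swap : ∑ i, ∑ j, A i j * w j ^ 2 = ∑ i, ∑ j, A i j * w i ^ 2 := by
    rw [Finset.sum_comm]
    refine Finset.sum_congr rfl fun j _ => ?_
    rw [← Finset.sum_mul, ← hbal j, Finset.sum_mul]
  have expand : ∀ i j : Fin N, A i j * (w i - w j)^2 =
      A i j * w i ^ 2 + A i j * w j ^ 2 - 2 * (A i j * w i * w j) := by
    intro i j; ring
  simp_rw [expand, Finset.sum_sub_distrib, Finset.sum_add_distrib, ← Finset.mul_sum]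
  rw [swap]
  have lhs : w ⬝ᵥ ((Matrix.diagonal fun i => ∑ j, A i j) - A).mulVec w
      = ∑ i, ∑ j, A i j * w i ^ 2 - ∑ i, ∑ j, A i j * w i * w j := by
    rw [Matrix.sub_mulVec, dotProduct_sub]
    congr 1
    · simp only [dotProduct, Matrix.mulVec_diagonal, Finset.sum_mul, Finset.mul_sum]
      exact Finset.sum_congr rfl fun i _ => Finset.sum_congr rfl fun j _ => by ring
    · simp only [dotProduct, Matrix.mulVec, Finset.mul_sum]
      exact Finset.sum_congr rfl fun i _ => Finset.sum_congr rfl fun j _ => by ring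
  rw [lhs]; ring

lemma dot_S_eq (L S : Matrix (Fin N) (Fin N) ℝ)
    (hS : S = (1 / 2 : ℝ) • (L + Lᵀ)) (w : Fin N → ℝ) :
    w ⬝ᵥ S.mulVec w = w ⬝ᵥ L.mulVec w := by
  subst hS
  have ht : w ⬝ᵥ Lᵀ.mulVec w = w ⬝ᵥ L.mulVec w := by
    rw [Matrix.dotProduct_mulVec, Matrix.vecMul_transpose, dotProduct_comm]
  rw [Matrix.smul_mulVec, Matrix.add_mulVec, dotProduct_smul,
    dotProduct_add, ht, smul_eq_mul]
  ring

lemma kernel_const (A : Matrix (Fin N) (Fin N) ℝ)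
    (hA : ∀ i j, 0 ≤ A i j)
    (hbal : ∀ i, ∑ j, A i j = ∑ j, A j i)
    (hconn : ∀ i j : Fin N,
      Relation.ReflTransGen (fun a b => A a b ≠ 0 ∨ A b a ≠ 0) i j)
    (L : Matrix (Fin N) (Fin N) ℝ)
    (hL : L = (Matrix.diagonal fun i => ∑ j, A i j) - A)
    (S : Matrix (Fin N) (Fin N) ℝ) (hS : S = (1 / 2 : ℝ) • (L + Lᵀ))
    (w : Fin N → ℝ) (hw : S.mulVec w = 0) : ∀ i j, w i = w j := by
  have hq := quad_form A hbal L hL w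
  have hws := dot_S_eq L S hS w
  have h0 : (1/2 : ℝ) * ∑ i, ∑ j, A i j * (w i - w j)^2 = 0 := by
    rw [← hq, ← hws, hw, dotProduct_zero]
  have hsum0 : ∑ i, ∑ j, A i j * (w i - w j)^2 = 0 := by linarith
  have key : ∀ i j, A i j * (w i - w j)^2 = 0 := by
    intro i j
    have h1 : ∀ i ∈ Finset.univ, (0:ℝ) ≤ ∑ j, A i j * (w i - w j)^2 :=
      fun i _ => Finset.sum_nonneg fun j _ => mul_nonneg (hA i j) (sq_nonneg _)
    have h2 := (Finset.sum_eq_zero_iff_of_nonneg h1).1 hsum0 i (Finset.mem_univ i)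
    have h3 : ∀ j ∈ Finset.univ, (0:ℝ) ≤ A i j * (w i - w j)^2 :=
      fun j _ => mul_nonneg (hA i j) (sq_nonneg _)
    exact (Finset.sum_eq_zero_iff_of_nonneg h3).1 h2 j (Finset.mem_univ j)
  have edge : ∀ a b : Fin N, (A a b ≠ 0 ∨ A b a ≠ 0) → w a = w b := by
    intro a b hab
    rcases hab with h | h
    · rcases mul_eq_zero.1 (key a b) with h' | h'
      · exact absurd h' h
      · have := sq_eq_zero_iff.1 h'
        linarith
    · rcases mul_eq_zero.1 (key b a) with h' | h'
      · exact absurd h' h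
      · have := sq_eq_zero_iff.1 h'
        linarith
  intro i j
  have h := hconn i j
  induction h with
  | refl => rfl
  | tail _ hbc ih => exact ih.trans (edge _ _ hbc)

lemma spectral_lb (S : Matrix (Fin N) (Fin N) ℝ) (hHerm : S.IsHermitian)
    (lam2 : ℝ)
    (hlam : IsLeast {μ : ℝ | μ ≠ 0 ∧ ∃ v : Fin N → ℝ, v ≠ 0 ∧ S.mulVec v = μ • v} lam2)
    (hker : ∀ w : Fin N → ℝ, S.mulVec w = 0 → ∀ i j, w i = w j)
    (y : Fin N → ℝ) (hy1 : ∑ i, y i = 0) :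
    lam2 * ∑ i, y i ^ 2 ≤ y ⬝ᵥ S.mulVec y := by
  classical
  set b := hHerm.eigenvectorBasis with hb
  set μ := hHerm.eigenvalues with hμ
  set Y : EuclideanSpace ℝ (Fin N) := (WithLp.equiv 2 (Fin N → ℝ)).symm y with hY
  set Z : EuclideanSpace ℝ (Fin N) := (WithLp.equiv 2 (Fin N → ℝ)).symm (S.mulVec y) with hZ
  set c : Fin N → ℝ := fun i => b.repr Y i with hc
  have hYc : ⇑Y = y := rfl
  -- coordinates of Z
  have hrepr : ∀ i, b.repr Z i = μ i * c i := by
    intro i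
    show b.repr Z i = μ i * b.repr Y i
    rw [b.repr_apply_apply, b.repr_apply_apply]
    have h1 : (inner ℝ (b i) Z : ℝ) = ⇑(b i) ⬝ᵥ S.mulVec y := by
      simp [PiLp.inner_apply, RCLike.inner_apply, dotProduct, hZ, mul_comm]
    have h2 : (inner ℝ (b i) Y : ℝ) = ⇑(b i) ⬝ᵥ y := by
      simp [PiLp.inner_apply, RCLike.inner_apply, dotProduct, hY, mul_comm]
    rw [h1, h2, Matrix.dotProduct_mulVec]
    have hT : Sᵀ = S := by
      calc Sᵀ = Sᴴ := by ext a b'; simp [Matrix.conjTranspose_apply]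
        _ = S := hHerm
    have hSt : ⇑(b i) ᵥ* S = S.mulVec ⇑(b i) := by
      nth_rewrite 1 [← hT]
      rw [Matrix.vecMul_transpose]
    rw [hSt, hHerm.mulVec_eigenvectorBasis]
    simp [smul_dotProduct, smul_eq_mul, mul_comm]; rfl
  have hinnerYZ : y ⬝ᵥ S.mulVec y = ∑ i, c i * (μ i * c i) := by
    have : (inner ℝ Y Z : ℝ) = y ⬝ᵥ S.mulVec y := by
      simp [PiLp.inner_apply, RCLike.inner_apply, dotProduct, hY, hZ, mul_comm]
    rw [← this, ← b.repr.inner_map_map Y Z]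
    simp_rw [PiLp.inner_apply, RCLike.inner_apply, starRingEnd_apply, star_trivial]
    exact Finset.sum_congr rfl fun i _ => by rw [hrepr i]; show μ i * c i * c i = c i * (μ i * c i); ring
  have hinnerYY : ∑ i, y i ^ 2 = ∑ i, c i * c i := by
    have : (inner ℝ Y Y : ℝ) = ∑ i, y i ^ 2 := by
      rw [hY, PiLp.inner_apply]; simp [RCLike.inner_apply, sq]
    rw [← this, ← b.repr.inner_map_map Y Y]
    simp_rw [PiLp.inner_apply, RCLike.inner_apply, starRingEnd_apply, star_trivial]
    rfl
  rw [hinnerYZ, hinnerYY, Finset.mul_sum]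
  refine Finset.sum_le_sum fun i _ => ?_
  by_cases hzero : μ i = 0
  · -- eigenvector is constant, so c i = 0
    have hv0 : S.mulVec ⇑(b i) = 0 := by
      have hzero' : hHerm.eigenvalues i = 0 := hzero
      rw [hHerm.mulVec_eigenvectorBasis, hzero', zero_smul]
    have hconst := hker _ hv0
    have hci : c i = 0 := by
      show b.repr Y i = 0
      rw [b.repr_apply_apply]
      have : (inner ℝ (b i) Y : ℝ) = ∑ k, (b i) k * y k := by
        simp [PiLp.inner_apply, RCLike.inner_apply, hY, mul_comm]
      rw [this]
      calc ∑ k, (b i) k * y k = ∑ k, (b i) i * y k :=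
            Finset.sum_congr rfl fun k _ => congrArg (fun t => t * y k) (hconst k i)
        _ = (b i) i * ∑ k, y k := by rw [Finset.mul_sum]
        _ = 0 := by rw [hy1, mul_zero]
    simp [hci]
  · have hmem : μ i ∈ {μ : ℝ | μ ≠ 0 ∧ ∃ v : Fin N → ℝ, v ≠ 0 ∧ S.mulVec v = μ • v} := by
      refine ⟨hzero, ⇑(b i), ?_, hHerm.mulVec_eigenvectorBasis i⟩
      intro h0
      have hb0 : (b i : EuclideanSpace ℝ (Fin N)) = 0 := by
        ext k; exact congrFun h0 k
      have h1 := b.orthonormal.1 i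
      rw [hb0, norm_zero] at h1
      exact zero_ne_one h1
    have hle : lam2 ≤ μ i := hlam.2 hmem
    have hcsq : 0 ≤ c i * c i := mul_self_nonneg _
    calc lam2 * (c i * c i) ≤ μ i * (c i * c i) := mul_le_mul_of_nonneg_right hle hcsq
      _ = c i * (μ i * c i) := by ring

end helpers

/-- key pointwise inequality for quantized consensus.  For the
Laplacian `L` of a weakly connected, weight-balanced graph, `y = x − (𝟙𝟙ᵀ/N)x`
(so `𝟙ᵀy = 0`) and `v` with `‖v − x‖ ≤ √N·Δ/2`, one has
`−yᵀLv ≤ −λ₂(Sym L)‖y‖(‖y‖ − (‖L‖/λ₂(Sym L))·(Δ/2)·√N)`. -/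
theorem key_pointwise_inequality (N : ℕ) (Δ : ℝ) (hΔ : 0 < Δ)
    (A : Matrix (Fin N) (Fin N) ℝ)
    (hA : ∀ i j, 0 ≤ A i j) (hdiag : ∀ i, A i i = 0)
    (hbal : ∀ i, ∑ j, A i j = ∑ j, A j i)
    (hconn : ∀ i j : Fin N,
      Relation.ReflTransGen (fun a b => A a b ≠ 0 ∨ A b a ≠ 0) i j)
    (L : Matrix (Fin N) (Fin N) ℝ)
    (hL : L = (Matrix.diagonal fun i => ∑ j, A i j) - A)
    (S : Matrix (Fin N) (Fin N) ℝ) (hS : S = (1 / 2 : ℝ) • (L + Lᵀ))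
    (lam2 : ℝ)
    (hlam : IsLeast {μ : ℝ | μ ≠ 0 ∧ ∃ v : Fin N → ℝ, v ≠ 0 ∧ S.mulVec v = μ • v} lam2)
    (CL : ℝ)
    (hCL : IsLeast {c : ℝ | 0 ≤ c ∧ ∀ v : Fin N → ℝ, en (L.mulVec v) ≤ c * en v} CL)
    (x y v : Fin N → ℝ)
    (hy : y = fun i => x i - (∑ j, x j) / N)
    (hy1 : ∑ i, y i = 0)
    (hv : en (fun i => v i - x i) ≤ Real.sqrt N * Δ / 2) :
    -(y ⬝ᵥ L.mulVec v)
      ≤ -(lam2 * en y * (en y - CL / lam2 * (Δ / 2) * Real.sqrt N)) := by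
  have hHerm : S.IsHermitian := by
    rw [hS]
    unfold Matrix.IsHermitian
    ext a b
    simp [Matrix.conjTranspose_apply, Matrix.smul_apply, Matrix.add_apply,
      Matrix.transpose_apply]
    ring
  have hker := kernel_const A hA hbal hconn L hL S hS
  -- L annihilates constants
  have hrow : ∀ i, ∑ j, L i j = 0 := by
    intro i
    rw [hL]
    simp [Matrix.sub_apply, Finset.sum_sub_distrib, Matrix.diagonal_apply,
      Finset.sum_ite_eq]
  have hLconst : ∀ cst : ℝ, L.mulVec (fun _ => cst) = 0 := by
    intro cst
    funext i
    show ∑ j, L i j * cst = (0 : Fin N → ℝ) i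
    rw [← Finset.sum_mul, hrow i, zero_mul, Pi.zero_apply]
  have hLx : L.mulVec x = L.mulVec y := by
    have hxy : x = y + fun _ => (∑ j, x j) / N := by
      funext i
      show x i = y i + (∑ j, x j) / N
      rw [hy]; ring
    rw [hxy, Matrix.mulVec_add, hLconst, add_zero]
  have split : y ⬝ᵥ L.mulVec v
      = y ⬝ᵥ L.mulVec y + y ⬝ᵥ L.mulVec (fun i => v i - x i) := by
    have hv' : v = x + fun i => v i - x i := by
      funext i
      show v i = x i + (v i - x i)
      ring
    conv_lhs => rw [hv']
    rw [Matrix.mulVec_add, dotProduct_add, hLx]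
  have h1 : lam2 * en y ^ 2 ≤ y ⬝ᵥ S.mulVec y := by
    rw [en_sq]
    exact spectral_lb S hHerm lam2 hlam hker y hy1
  have h1' : lam2 * en y ^ 2 ≤ y ⬝ᵥ L.mulVec y := by
    rw [← dot_S_eq L S hS y]; exact h1
  have hCL0 : 0 ≤ CL := hCL.1.1
  have h2 : -(y ⬝ᵥ L.mulVec (fun i => v i - x i))
      ≤ en y * (CL * (Real.sqrt N * Δ / 2)) := by
    have ha : -(y ⬝ᵥ L.mulVec (fun i => v i - x i))
        ≤ en y * en (L.mulVec (fun i => v i - x i)) :=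
      le_trans (neg_le_abs _) (abs_dot_le _ _)
    refine ha.trans ?_
    refine mul_le_mul_of_nonneg_left ?_ (en_nonneg y)
    refine (hCL.1.2 _).trans ?_
    exact mul_le_mul_of_nonneg_left hv hCL0
  have hlam2ne : lam2 ≠ 0 := hlam.1.1
  have hclam : CL / lam2 * lam2 = CL := div_mul_cancel₀ CL hlam2ne
  calc -(y ⬝ᵥ L.mulVec v)
      = -(y ⬝ᵥ L.mulVec y) + -(y ⬝ᵥ L.mulVec (fun i => v i - x i)) := by
        rw [split]; ring
    _ ≤ -(lam2 * en y ^ 2) + en y * (CL * (Real.sqrt N * Δ / 2)) :=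
        add_le_add (neg_le_neg h1') h2
    _ = -(lam2 * en y * (en y - CL / lam2 * (Δ / 2) * Real.sqrt N)) := by
        linear_combination (-(en y * (Δ / 2) * Real.sqrt N)) * hclam
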